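/- Let x, y, z, x', y', z' ∈ ℝ and let a, b, c ∈ ℝ be all nonzero. Suppose the following three equations hold: x'·z·a − x'·y'·b − z·y·c = 0; −x·z·a + x·y'·b − y'·z'·c = 0; −x'·z'·a − x·y·b + z'·y·c = 0. Then x·y·z + x'·y'·z' = 0. -/
import Mathlib

/-- The algebraic core of equation (10): if `(a, b, c)` with
`a, b, c` all nonzero solves the linear system given by the three cyclic
permutations of the second Levi-Civita separability condition, then
`x·y·z + x'·y'·z' = 0`. -/
theorem levi_civita_determinant_condition
    (x y z x' y' z' a b c : ℝ)
    (ha : a ≠ 0) (hb : b ≠ 0) (hc : c ≠ 0)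
    (h1 : x' * z * a - x' * y' * b - z * y * c = 0)
    (h2 : -(x * z) * a + x * y' * b - y' * z' * c = 0)
    (h3 : -(x' * z') * a - x * y * b + z' * y * c = 0) :
    x * y * z + x' * y' * z' = 0 := by
  have key : a * (x * y * z + x' * y' * z') ^ 2 = 0 := by
    linear_combination (-(y * (x * y * z + x' * y' * z'))) * h2 +
      (-(y' * (x * y * z + x' * y' * z'))) * h3
  have hs : (x * y * z + x' * y' * z') ^ 2 = 0 := by
    rcases mul_eq_zero.mp key with h | h
    · exact absurd h ha
    · exact h
  exact pow_eq_zero_iff (n := 2) (by norm_num) |>.mp hs
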